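/- For any natural number N and any points x₁,…,x_N ∈ ℝ, the N×N matrix K with entries K_{n,n'} = sinc(x_n − x_{n'}) is symmetric positive semidefinite (i.e., the sinc function is a valid reproducing kernel). -/

import Mathlib

/-- The sinc function: `sinc 0 = 1`, `sinc t = sin (π t) / (π t)` otherwise. -/
noncomputable def sinc (t : ℝ) : ℝ :=
  if t = 0 then 1 else Real.sin (Real.pi * t) / (Real.pi * t)

lemma sinc_neg (t : ℝ) : sinc (-t) = sinc t := by
  rcases eq_or_ne t 0 with h | h
  · simp [h]
  · rw [sinc, sinc, if_neg h, if_neg (neg_ne_zero.mpr h)]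
    rw [mul_neg, Real.sin_neg, neg_div_neg_eq]

lemma sinc_eq_integral (t : ℝ) :
    sinc t = ∫ ω in (0:ℝ)..1, Real.cos (Real.pi * t * ω) := by
  rcases eq_or_ne t 0 with h | h
  · simp [sinc, h]
  · have hc : Real.pi * t ≠ 0 := mul_ne_zero Real.pi_ne_zero h
    rw [sinc, if_neg h,
      intervalIntegral.integral_comp_mul_left Real.cos hc,
      integral_cos]
    simp [smul_eq_mul, div_eq_inv_mul]

lemma cos_sum_sq {ι : Type*} (s : Finset ι) (v a : ι → ℝ) :
    ∑ n ∈ s, ∑ m ∈ s, v n * v m * Real.cos (a n - a m)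
      = (∑ n ∈ s, v n * Real.cos (a n))^2 + (∑ n ∈ s, v n * Real.sin (a n))^2 := by
  rw [sq, sq, Finset.sum_mul_sum, Finset.sum_mul_sum, ← Finset.sum_add_distrib]
  refine Finset.sum_congr rfl fun n _ => ?_
  rw [← Finset.sum_add_distrib]
  refine Finset.sum_congr rfl fun m _ => ?_
  rw [Real.cos_sub]; ring

/-- **P1.** For any points `x₁,…,x_N ∈ ℝ`, the `N×N` matrix with entries
`K n n' = sinc (x n − x n')` is symmetric positive semidefinite. -/
theorem sinc_gram_matrix_posSemidef (N : ℕ) (x : Fin N → ℝ) :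
    (Matrix.of fun n n' : Fin N => sinc (x n - x n')).PosSemidef := by
  refine Matrix.PosSemidef.of_dotProduct_mulVec_nonneg ?_ ?_
  · ext n m
    simp only [Matrix.conjTranspose_apply, Matrix.of_apply, star_trivial]
    rw [← sinc_neg, neg_sub]
  · intro v
    have key : dotProduct (star v) ((Matrix.of fun n n' : Fin N => sinc (x n - x n')).mulVec v) =
        ∫ ω in (0:ℝ)..1,
          ((∑ n, v n * Real.cos (Real.pi * x n * ω))^2
            + (∑ n, v n * Real.sin (Real.pi * x n * ω))^2) := by
      simp only [dotProduct, Matrix.mulVec, dotProduct, Matrix.of_apply,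
        star_trivial, Pi.star_apply]
      have step : ∀ n : Fin N,
          v n * ∑ m, sinc (x n - x m) * v m
            = ∫ ω in (0:ℝ)..1, ∑ m, v n * v m * Real.cos (Real.pi * (x n - x m) * ω) := by
        intro n
        rw [intervalIntegral.integral_finset_sum (fun m _ =>
          ((by fun_prop : Continuous fun ω : ℝ =>
            v n * v m * Real.cos (Real.pi * (x n - x m) * ω)).intervalIntegrable 0 1)),
          Finset.mul_sum]
        refine Finset.sum_congr rfl fun m _ => ?_
        rw [intervalIntegral.integral_const_mul, ← sinc_eq_integral]
        ring
      calc ∑ n, v n * ∑ m, sinc (x n - x m) * v m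
          = ∑ n, ∫ ω in (0:ℝ)..1, ∑ m, v n * v m * Real.cos (Real.pi * (x n - x m) * ω) := by
            exact Finset.sum_congr rfl fun n _ => step n
        _ = ∫ ω in (0:ℝ)..1, ∑ n, ∑ m, v n * v m * Real.cos (Real.pi * (x n - x m) * ω) := by
            rw [intervalIntegral.integral_finset_sum]
            intro n _
            exact ((by fun_prop : Continuous fun ω : ℝ =>
              ∑ m, v n * v m * Real.cos (Real.pi * (x n - x m) * ω)).intervalIntegrable 0 1)
        _ = ∫ ω in (0:ℝ)..1,
              ((∑ n, v n * Real.cos (Real.pi * x n * ω))^2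
                + (∑ n, v n * Real.sin (Real.pi * x n * ω))^2) := by
            refine intervalIntegral.integral_congr fun ω _ => ?_
            have := cos_sum_sq (Finset.univ : Finset (Fin N)) v (fun n => Real.pi * x n * ω)
            rw [← this]
            refine Finset.sum_congr rfl fun n _ => Finset.sum_congr rfl fun m _ => ?_
            ring_nf
    rw [key]
    apply intervalIntegral.integral_nonneg (by norm_num)
    intro ω _
    positivity
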